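/- arXiv:2510.21410 — 2 statements merged into one kernel-verified Lean document; each statement's English description precedes it below -/
import Mathlib

section
/- Let M be a log-convex sequence with lim_p μ_p = ∞ (μ_p := M_p/M_{p−1}) and suppose: (a) there exists an integer Q ≥ 2 with liminf_{p→∞} μ_{Qp}/μ_p > 1, and (b) lim_{p→∞} μ_p / (M_{p−1}/M_0)^{1/(p−1)} = +∞. Then the associated weight function ω_M(t) = sup_p log(M_0 t^p/M_p) is slowly varying: for every u > 0, lim_{t→∞} ω_M(ut)/ω_M(t) = 1. -/
open Filter

/-- Associated weight function ω_M(t) = sup_p log(M_0 t^p / M_p). -/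
noncomputable def assoc (M : ℕ → ℝ) (t : ℝ) : ℝ :=
  ⨆ p : ℕ, Real.log (M 0 * t ^ p / M p)

namespace Stmt17Aux

variable {M : ℕ → ℝ}

/-- The quotient sequence μ_p = M_p / M_{p-1}. -/
noncomputable def mu (M : ℕ → ℝ) (p : ℕ) : ℝ := M p / M (p - 1)

/-- The individual terms of the sup defining `assoc`. -/
noncomputable def F (M : ℕ → ℝ) (p : ℕ) (t : ℝ) : ℝ := Real.log (M 0 * t ^ p / M p)

lemma mu_pos (hpos : ∀ p, 0 < M p) (p : ℕ) : 0 < mu M p := div_pos (hpos p) (hpos _)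

lemma mu_succ (p : ℕ) : mu M (p + 1) = M (p + 1) / M p := by simp [mu]

lemma mu_mono (hpos : ∀ p, 0 < M p)
    (hlc : ∀ p : ℕ, 1 ≤ p → (M p) ^ 2 ≤ M (p - 1) * M (p + 1)) :
    ∀ p q : ℕ, 1 ≤ p → p ≤ q → mu M p ≤ mu M q := by
  intro p q hp hpq
  induction q, hpq using Nat.le_induction with
  | base => exact le_refl _
  | succ q hq ih =>
    refine ih.trans ?_
    have h := hlc q (hp.trans hq)
    rw [mu, mu_succ, div_le_div_iff₀ (hpos _) (hpos _)]
    nlinarith [hpos q, hpos (q - 1), hpos (q + 1)]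

lemma F_eq (hpos : ∀ p, 0 < M p) (p : ℕ) {t : ℝ} (ht : 0 < t) :
    F M p t = Real.log (M 0) + p * Real.log t - Real.log (M p) := by
  rw [F, Real.log_div (mul_pos (hpos 0) (pow_pos ht p)).ne' (hpos p).ne',
    Real.log_mul (hpos 0).ne' (pow_pos ht p).ne', Real.log_pow]

lemma mu_tendsto (hqtend : Tendsto (fun p : ℕ => M p / M (p - 1)) atTop atTop) :
    Tendsto (mu M) atTop atTop := hqtend

/-- `NN M t` is the optimal index: the largest `p` with `μ_p ≤ t`. -/
noncomputable def NN (M : ℕ → ℝ) (t : ℝ) : ℕ := sInf {p | t < mu M (p + 1)}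

lemma NN_spec (hqtend : Tendsto (fun p : ℕ => M p / M (p - 1)) atTop atTop) (t : ℝ) :
    t < mu M (NN M t + 1) := by
  have h : {p : ℕ | t < mu M (p + 1)}.Nonempty := by
    obtain ⟨p0, hp0⟩ := eventually_atTop.1 ((mu_tendsto hqtend).eventually_gt_atTop t)
    exact ⟨p0, hp0 (p0 + 1) (by omega)⟩
  exact Nat.sInf_mem h

lemma NN_min (t : ℝ) {k : ℕ} (hk1 : 1 ≤ k) (hk : k ≤ NN M t) : mu M k ≤ t := by
  by_contra h
  push_neg at h
  have := Nat.sInf_le (show k - 1 ∈ {p : ℕ | t < mu M (p + 1)} by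
    simp only [Set.mem_setOf_eq]; rwa [Nat.sub_add_cancel hk1])
  rw [NN] at hk
  omega

section
variable (hpos : ∀ p, 0 < M p)
    (hlc : ∀ p : ℕ, 1 ≤ p → (M p) ^ 2 ≤ M (p - 1) * M (p + 1))
    (hqtend : Tendsto (fun p : ℕ => M p / M (p - 1)) atTop atTop)
include hpos

lemma F_succ (p : ℕ) {t : ℝ} (ht : 0 < t) :
    F M (p + 1) t = F M p t + (Real.log t - Real.log (mu M (p + 1))) := by
  rw [F_eq hpos _ ht, F_eq hpos _ ht]
  have h : Real.log (mu M (p + 1)) = Real.log (M (p + 1)) - Real.log (M p) := by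
    rw [mu_succ, Real.log_div (hpos _).ne' (hpos _).ne']
  rw [h]
  push_cast
  ring

include hlc hqtend

lemma NN_ge {t : ℝ} {k : ℕ} (hk1 : 1 ≤ k) (hk : mu M k ≤ t) : k ≤ NN M t := by
  by_contra h
  push_neg at h
  have h2 : mu M (NN M t + 1) ≤ mu M k := mu_mono hpos hlc _ _ (by omega) (by omega)
  exact absurd ((NN_spec hqtend t).trans_le h2) (not_lt.2 hk)

lemma F_le {t : ℝ} (ht : 0 < t) (p : ℕ) : F M p t ≤ F M (NN M t) t := by
  set n := NN M t with hn
  rcases le_or_gt p n with hpn | hpn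
  · have aux : ∀ m, p ≤ m → m ≤ n → F M p t ≤ F M m t := by
      intro m hm
      induction m, hm using Nat.le_induction with
      | base => intro _; exact le_refl _
      | succ m hm ih =>
        intro hmn
        refine (ih (by omega)).trans ?_
        rw [F_succ hpos m ht]
        have hmu : mu M (m + 1) ≤ t := NN_min t (by omega) (by omega)
        have := Real.log_le_log (mu_pos hpos (m + 1)) hmu
        linarith
    exact aux n hpn (le_refl n)
  · have aux : ∀ m, n ≤ m → F M m t ≤ F M n t := by
      intro m hm
      induction m, hm using Nat.le_induction with
      | base => exact le_refl _
      | succ m hm ih =>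
        refine le_trans ?_ ih
        rw [F_succ hpos m ht]
        have hmu : t < mu M (m + 1) :=
          (NN_spec hqtend t).trans_le (mu_mono hpos hlc _ _ (by omega) (by omega))
        have := Real.log_le_log ht hmu.le
        linarith
    exact aux p hpn.le

lemma assoc_eq {t : ℝ} (ht : 0 < t) : assoc M t = F M (NN M t) t := by
  refine le_antisymm (ciSup_le fun p => F_le hpos hlc hqtend ht p) ?_
  exact le_ciSup ⟨F M (NN M t) t, by rintro x ⟨p, rfl⟩; exact F_le hpos hlc hqtend ht p⟩ _

lemma assoc_ge {t : ℝ} (ht : 0 < t) (p : ℕ) : F M p t ≤ assoc M t := by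
  rw [assoc_eq hpos hlc hqtend ht]; exact F_le hpos hlc hqtend ht p

omit hlc hqtend in
lemma F_mono_t (p : ℕ) {t s : ℝ} (ht : 0 < t) (hts : t ≤ s) : F M p t ≤ F M p s := by
  have h1 : (0:ℝ) < M 0 * t ^ p / M p := by
    have := hpos 0; have := hpos p; positivity
  apply Real.log_le_log h1
  gcongr
  · exact (hpos p).le
  · exact (hpos 0).le

lemma assoc_mono {t s : ℝ} (ht : 0 < t) (hts : t ≤ s) : assoc M t ≤ assoc M s := by
  rw [assoc_eq hpos hlc hqtend ht]
  exact (F_mono_t hpos _ ht hts).trans (assoc_ge hpos hlc hqtend (ht.trans_le hts) _)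

lemma assoc_tendsto : Tendsto (assoc M) atTop atTop := by
  apply tendsto_atTop_mono' atTop
    (show ∀ᶠ t : ℝ in atTop, Real.log (M 0) - Real.log (M 1) + Real.log t ≤ assoc M t from ?_)
  · exact tendsto_atTop_add_const_left _ _ Real.tendsto_log_atTop
  · filter_upwards [eventually_gt_atTop (0:ℝ)] with t ht
    have := assoc_ge hpos hlc hqtend ht 1
    rw [F_eq hpos 1 ht] at this
    push_cast at this
    linarith

omit hlc hqtend in
lemma F_at_mu {p : ℕ} (hp : 2 ≤ p) :
    F M p (mu M p) = ((p : ℝ) - 1) *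
      Real.log ((M p / M (p - 1)) / ((M (p - 1) / M 0) ^ ((1 : ℝ) / ((p : ℝ) - 1)))) := by
  have h1 : (0:ℝ) < (p : ℝ) - 1 := by
    have : (2:ℝ) ≤ (p:ℝ) := by exact_mod_cast hp
    linarith
  have hb : (0:ℝ) < M (p - 1) / M 0 := div_pos (hpos _) (hpos 0)
  have hmu0 : (0:ℝ) < M p / M (p - 1) := div_pos (hpos _) (hpos _)
  rw [F_eq hpos p (mu_pos hpos p),
    Real.log_div hmu0.ne' (Real.rpow_pos_of_pos hb _).ne',
    Real.log_rpow hb, Real.log_div (hpos _).ne' (hpos 0).ne']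
  have hmu : Real.log (mu M p) = Real.log (M p) - Real.log (M (p - 1)) :=
    Real.log_div (hpos p).ne' (hpos _).ne'
  have hmu2 : Real.log (M p / M (p - 1)) = Real.log (M p) - Real.log (M (p - 1)) := hmu
  rw [hmu, hmu2]
  field_simp
  ring

include hlc hqtend in
lemma lower (hfast : Tendsto
      (fun p : ℕ => (M p / M (p - 1)) / ((M (p - 1) / M 0) ^ ((1 : ℝ) / (p - 1))))
      atTop atTop) (K : ℝ) :
    ∀ᶠ s : ℝ in atTop, ((NN M s : ℝ) - 1) * K ≤ assoc M s := by
  obtain ⟨p0, hp0⟩ := eventually_atTop.1 (hfast.eventually_ge_atTop (Real.exp K))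
  filter_upwards [eventually_ge_atTop (max (mu M (max p0 2)) 1)] with s hs
  have hs1 : (1:ℝ) ≤ s := le_trans (le_max_right _ _) hs
  have hs0 : (0:ℝ) < s := lt_of_lt_of_le one_pos hs1
  have hmu1 : mu M (max p0 2) ≤ s := le_trans (le_max_left _ _) hs
  have hp1 : max p0 2 ≤ NN M s := NN_ge hpos hlc hqtend (by omega) hmu1
  set n := NN M s with hn
  have hn2 : 2 ≤ n := le_trans (le_max_right p0 2) hp1
  have hmuns : mu M n ≤ s := NN_min s (by omega) (le_refl n)
  have h2 : F M n (mu M n) ≤ assoc M s :=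
    (F_mono_t hpos n (mu_pos hpos n) hmuns).trans (assoc_ge hpos hlc hqtend hs0 n)
  rw [F_at_mu hpos hn2] at h2
  have hd := hp0 n (le_trans (le_max_left p0 2) hp1)
  have hdd : Real.exp K ≤ (M n / M (n - 1)) / ((M (n - 1) / M 0) ^ ((1 : ℝ) / ((n:ℝ) - 1))) := hd
  have hlog : K ≤ Real.log ((M n / M (n - 1)) / ((M (n - 1) / M 0) ^ ((1 : ℝ) / ((n:ℝ) - 1)))) := by
    rw [← Real.log_exp K]
    exact Real.log_le_log (Real.exp_pos K) hdd
  have hcast : (0:ℝ) ≤ (n:ℝ) - 1 := by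
    have : (2:ℝ) ≤ (n:ℝ) := by exact_mod_cast hn2
    linarith
  calc ((n:ℝ) - 1) * K ≤ ((n:ℝ) - 1) *
        Real.log ((M n / M (n - 1)) / ((M (n - 1) / M 0) ^ ((1 : ℝ) / ((n:ℝ) - 1)))) :=
        mul_le_mul_of_nonneg_left hlog hcast
    _ ≤ assoc M s := h2

end
end Stmt17Aux

lemma arith17 {ε L K a b n : ℝ} (hε : 0 < ε) (hL : 0 ≤ L)
    (hK1 : 2 * L + 1 ≤ K) (hK2 : 8 * (L + 1) / ε ≤ K)
    (hab : a ≤ b) (hupper : b ≤ a + n * L) (hlower : (n - 1) * K ≤ b)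
    (ha1 : 2 * (L + 1) / ε < a) (ha2 : L + 1 < a) :
    |b / a - 1| < ε := by
  have hK0 : 0 < K := by linarith
  have ha0 : 0 < a := lt_of_le_of_lt (by positivity) ha1
  have haε : 2 * (L + 1) < a * ε := (div_lt_iff₀ hε).1 ha1
  have hKε : 8 * (L + 1) ≤ K * ε := (div_le_iff₀ hε).1 hK2
  have h5 : n * K ≤ b + K := by nlinarith
  have h6 : n * K * L ≤ (b + K) * L := mul_le_mul_of_nonneg_right h5 hL
  have h7 : b * K ≤ a * K + (b + K) * L := by nlinarith [mul_le_mul_of_nonneg_right hupper hK0.le]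
  have h8a : b * (K - L) ≤ (a + L) * K := by nlinarith
  have h8b : (a + L) * K ≤ (2 * (a + L)) * (K - L) := by nlinarith
  have h8 : b ≤ 2 * (a + L) := le_of_mul_le_mul_right (h8a.trans h8b) (by linarith)
  have h9 : b * L ≤ (2 * (a + L)) * L := mul_le_mul_of_nonneg_right h8 hL
  have hx1 : 2 * (L + 1) * K < a * ε * K := mul_lt_mul_of_pos_right haε hK0
  have hx2 : 8 * (L + 1) * a ≤ K * ε * a := mul_le_mul_of_nonneg_right hKε ha0.le
  have hprod : 0 ≤ (a - L) * L := mul_nonneg (by linarith) hL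
  have hfinal : (b - a) * K < ε * a * K := by nlinarith
  have hba : b - a < ε * a := lt_of_mul_lt_mul_right hfinal hK0.le
  rw [abs_of_nonneg (by rw [sub_nonneg]; exact (one_le_div ha0).2 hab), div_sub_one ha0.ne',
    div_lt_iff₀ ha0]
  linarith

open Stmt17Aux in
lemma stmt17_main_ge_one (M : ℕ → ℝ) (hpos : ∀ p, 0 < M p)
    (hlc : ∀ p : ℕ, 1 ≤ p → (M p) ^ 2 ≤ M (p - 1) * M (p + 1))
    (hqtend : Tendsto (fun p : ℕ => M p / M (p - 1)) atTop atTop)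
    (hfast : Tendsto
      (fun p : ℕ => (M p / M (p - 1)) / ((M (p - 1) / M 0) ^ ((1 : ℝ) / (p - 1))))
      atTop atTop) {u : ℝ} (hu : 1 ≤ u) :
    Tendsto (fun t : ℝ => assoc M (u * t) / assoc M t) atTop (nhds 1) := by
  have hu0 : (0:ℝ) < u := lt_of_lt_of_le one_pos hu
  rw [Metric.tendsto_nhds]
  intro ε hε
  set L := Real.log u with hLdef
  have hL0 : 0 ≤ L := Real.log_nonneg hu
  set K := 2 * L + 8 * (L + 1) / ε + 1 with hKdef
  have hdiv0 : 0 ≤ 8 * (L + 1) / ε := by positivity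
  have hK1 : 2 * L + 1 ≤ K := by rw [hKdef]; linarith
  have hK2 : 8 * (L + 1) / ε ≤ K := by rw [hKdef]; linarith
  have hut : Tendsto (fun t : ℝ => u * t) atTop atTop :=
    Tendsto.const_mul_atTop hu0 tendsto_id
  have E1 := hut.eventually (lower hpos hlc hqtend hfast K)
  have E2 := (assoc_tendsto hpos hlc hqtend).eventually_gt_atTop
    (max (2 * (L + 1) / ε) (L + 1))
  filter_upwards [E1, E2, eventually_gt_atTop (0:ℝ)] with t h1 h2 h3
  have h3u : 0 < u * t := mul_pos hu0 h3
  have htut : t ≤ u * t := le_mul_of_one_le_left h3.le hu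
  have hab : assoc M t ≤ assoc M (u * t) := assoc_mono hpos hlc hqtend h3 htut
  have hupper : assoc M (u * t) ≤ assoc M t + (NN M (u * t) : ℝ) * L := by
    have e1 : assoc M (u * t) = F M (NN M (u * t)) (u * t) := assoc_eq hpos hlc hqtend h3u
    have e2 : F M (NN M (u * t)) t ≤ assoc M t := assoc_ge hpos hlc hqtend h3 _
    rw [F_eq hpos _ h3] at e2
    rw [e1, F_eq hpos _ h3u, Real.log_mul hu0.ne' h3.ne']
    nlinarith [e2]
  rw [Real.dist_eq]
  exact arith17 hε hL0 hK1 hK2 hab hupper h1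
    (lt_of_le_of_lt (le_max_left _ _) h2) (lt_of_le_of_lt (le_max_right _ _) h2)

/-- For a log-convex weight sequence M with quotients μ_p = M_p/M_{p−1} → ∞,
if (a) ∃ Q ≥ 2 with liminf μ_{Qp}/μ_p > 1 and (b) μ_p/(M_{p−1}/M_0)^{1/(p−1)} → ∞, then
ω_M is slowly varying: ω_M(ut)/ω_M(t) → 1 as t → ∞ for every u > 0. -/
theorem stmt17 (M : ℕ → ℝ) (hpos : ∀ p, 0 < M p)
    (hlc : ∀ p : ℕ, 1 ≤ p → (M p) ^ 2 ≤ M (p - 1) * M (p + 1))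
    (hqtend : Tendsto (fun p : ℕ => M p / M (p - 1)) atTop atTop)
    (hQ : ∃ Q : ℕ, 2 ≤ Q ∧
      1 < Filter.liminf
        (fun p : ℕ => (M (Q * p) / M (Q * p - 1)) / (M p / M (p - 1))) atTop)
    (hfast : Tendsto
      (fun p : ℕ => (M p / M (p - 1)) / ((M (p - 1) / M 0) ^ ((1 : ℝ) / (p - 1))))
      atTop atTop) :
    ∀ u : ℝ, 0 < u →
      Tendsto (fun t : ℝ => assoc M (u * t) / assoc M t) atTop (nhds 1) := by
  intro u hu
  rcases le_or_gt 1 u with h1u | h1u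
  · exact stmt17_main_ge_one M hpos hlc hqtend hfast h1u
  · have hinv1 : 1 ≤ u⁻¹ := (one_le_inv_iff₀.2 ⟨hu, h1u.le⟩ : _)
    have hmain := stmt17_main_ge_one M hpos hlc hqtend hfast hinv1
    have hut : Tendsto (fun t : ℝ => u * t) atTop atTop :=
      Tendsto.const_mul_atTop hu tendsto_id
    have hcomp := hmain.comp hut
    have heq : (fun t : ℝ => assoc M (u⁻¹ * (u * t)) / assoc M (u * t)) =
        fun t : ℝ => assoc M t / assoc M (u * t) := by
      funext t
      rw [inv_mul_cancel_left₀ hu.ne']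
    rw [show ((fun t : ℝ => assoc M (u⁻¹ * t) / assoc M t) ∘ fun t : ℝ => u * t) =
        fun t : ℝ => assoc M t / assoc M (u * t) from heq] at hcomp
    have hinv := hcomp.inv₀ one_ne_zero
    simpa [inv_div] using hinv
end

section
/- Let M be a log-convex sequence with lim_p μ_p = ∞ (μ_p := M_p/M_{p−1}) whose associated weight function ω_M(t) = sup_p log(M_0 t^p/M_p) is slowly varying (ω_M(ut)/ω_M(t) → 1 as t → ∞ for each u > 0). Then lim_{p→∞} μ_p / (M_{p−1}/M_0)^{1/(p−1)} = +∞. -/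
open Filter

section Aux
variable {M : ℕ → ℝ}

lemma Qmono (hpos : ∀ p, 0 < M p)
    (hlc : ∀ p : ℕ, 1 ≤ p → (M p) ^ 2 ≤ M (p - 1) * M (p + 1)) :
    ∀ k l : ℕ, 1 ≤ k → k ≤ l → M k / M (k-1) ≤ M l / M (l-1) := by
  intro k l hk hkl
  induction l, hkl using Nat.le_induction with
  | base => exact le_rfl
  | succ n hn ih =>
    refine le_trans ih ?_
    have h1 : 1 ≤ n := le_trans hk hn
    have := hlc n h1
    rw [div_le_div_iff₀ (hpos (n-1)) (hpos ((n+1)-1))]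
    simp only [Nat.add_sub_cancel]
    nlinarith [hpos n, hpos (n-1), hpos (n+1)]

lemma chain_up (hpos : ∀ p, 0 < M p) {t : ℝ} (ht : 0 < t) :
    ∀ N q : ℕ, q ≤ N → (∀ k, q < k → k ≤ N → M k / M (k-1) ≤ t) →
      t ^ q * M N ≤ t ^ N * M q := by
  intro N
  induction N with
  | zero => intro q hq _; interval_cases q; exact le_rfl
  | succ n ih =>
    intro q hq h
    rcases Nat.lt_or_ge q (n+1) with h1 | h1
    · have hq' : q ≤ n := by omega
      have step : M (n+1) ≤ t * M n := by
        have h2 := h (n+1) (by omega) le_rfl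
        simp only [Nat.add_sub_cancel] at h2
        rw [div_le_iff₀ (hpos n)] at h2
        linarith
      have ihq := ih q hq' (fun k hk1 hk2 => h k hk1 (by omega))
      have e1 : t ^ q * M (n+1) ≤ t ^ q * (t * M n) :=
        mul_le_mul_of_nonneg_left step (by positivity)
      have e2 : t * (t ^ q * M n) ≤ t * (t ^ n * M q) :=
        mul_le_mul_of_nonneg_left ihq (le_of_lt ht)
      calc t ^ q * M (n+1) ≤ t ^ q * (t * M n) := e1
        _ = t * (t ^ q * M n) := by ring
        _ ≤ t * (t ^ n * M q) := e2
        _ = t ^ (n+1) * M q := by ring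
    · have : q = n+1 := by omega
      subst this; exact le_rfl

lemma chain_down (hpos : ∀ p, 0 < M p) {t : ℝ} (ht : 0 < t) :
    ∀ q N : ℕ, N ≤ q → (∀ k, N < k → k ≤ q → t ≤ M k / M (k-1)) →
      t ^ q * M N ≤ t ^ N * M q := by
  intro q
  induction q with
  | zero => intro N hN _; interval_cases N; exact le_rfl
  | succ n ih =>
    intro N hN h
    rcases Nat.lt_or_ge N (n+1) with h1 | h1
    · have hN' : N ≤ n := by omega
      have step : t * M n ≤ M (n+1) := by
        have h2 := h (n+1) (by omega) le_rfl
        simp only [Nat.add_sub_cancel] at h2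
        rw [le_div_iff₀ (hpos n)] at h2
        linarith
      have ihq := ih N hN' (fun k hk1 hk2 => h k hk1 (by omega))
      have e2 : t * (t ^ n * M N) ≤ t * (t ^ N * M n) :=
        mul_le_mul_of_nonneg_left ihq (le_of_lt ht)
      have e3 : t ^ N * (t * M n) ≤ t ^ N * M (n+1) :=
        mul_le_mul_of_nonneg_left step (by positivity)
      calc t ^ (n+1) * M N = t * (t ^ n * M N) := by ring
        _ ≤ t * (t ^ N * M n) := e2
        _ = t ^ N * (t * M n) := by ring
        _ ≤ t ^ N * M (n+1) := e3
    · have : N = n+1 := by omega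
      subst this; exact le_rfl

lemma term_le (hpos : ∀ p, 0 < M p) {t : ℝ} (ht : 0 < t) (N : ℕ)
    (hlow : ∀ k, 1 ≤ k → k ≤ N → M k / M (k-1) ≤ t)
    (hhigh : ∀ k, N < k → t ≤ M k / M (k-1)) (q : ℕ) :
    Real.log (M 0 * t ^ q / M q) ≤ Real.log (M 0 * t ^ N / M N) := by
  have h0 := hpos 0
  apply Real.log_le_log (div_pos (mul_pos h0 (pow_pos ht q)) (hpos q))
  rw [div_le_div_iff₀ (hpos q) (hpos N)]
  rcases le_total q N with h | h
  · have := chain_up hpos ht N q h (fun k h1 h2 => hlow k (by omega) h2)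
    nlinarith [hpos 0]
  · have := chain_down hpos ht q N h (fun k h1 _ => hhigh k h1)
    nlinarith [hpos 0]

lemma exists_N (hpos : ∀ p, 0 < M p)
    (hlc : ∀ p : ℕ, 1 ≤ p → (M p) ^ 2 ≤ M (p - 1) * M (p + 1))
    (hqtend : Tendsto (fun p : ℕ => M p / M (p - 1)) atTop atTop) (t : ℝ) :
    ∃ N : ℕ, (∀ k, 1 ≤ k → k ≤ N → M k / M (k-1) ≤ t) ∧
      (∀ k, N < k → t ≤ M k / M (k-1)) := by
  classical
  have hev : ∃ n : ℕ, ∀ k, n < k → t ≤ M k / M (k-1) := by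
    obtain ⟨a, ha⟩ := eventually_atTop.mp (hqtend.eventually_ge_atTop t)
    exact ⟨a, fun k hk => ha k (le_of_lt hk)⟩
  refine ⟨Nat.find hev, ?_, Nat.find_spec hev⟩
  intro k hk1 hkN
  have hmin := Nat.find_min hev (m := k - 1) (by omega)
  push_neg at hmin
  obtain ⟨j, hj1, hj2⟩ := hmin
  exact le_of_lt (lt_of_le_of_lt (Qmono hpos hlc k j hk1 (by omega)) hj2)

end Aux

/-- For a log-convex weight sequence M with quotients μ_p = M_p/M_{p−1} → ∞,
if ω_M is slowly varying (ω_M(ut)/ω_M(t) → 1 for each u > 0), then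
μ_p/(M_{p−1}/M_0)^{1/(p−1)} → ∞. -/
theorem stmt18 (M : ℕ → ℝ) (hpos : ∀ p, 0 < M p)
    (hlc : ∀ p : ℕ, 1 ≤ p → (M p) ^ 2 ≤ M (p - 1) * M (p + 1))
    (hqtend : Tendsto (fun p : ℕ => M p / M (p - 1)) atTop atTop)
    (hslow : ∀ u : ℝ, 0 < u →
      Tendsto (fun t : ℝ => assoc M (u * t) / assoc M t) atTop (nhds 1)) :
    Tendsto
      (fun p : ℕ => (M p / M (p - 1)) / ((M (p - 1) / M 0) ^ ((1 : ℝ) / (p - 1))))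
      atTop atTop := by
  classical
  set Q : ℕ → ℝ := fun p => M p / M (p - 1) with hQ
  have hQpos : ∀ p, 0 < Q p := fun p => div_pos (hpos p) (hpos (p-1))
  set g : ℕ → ℝ := fun p => Q p / ((M (p - 1) / M 0) ^ ((1 : ℝ) / ((p : ℝ) - 1))) with hg
  have hgpos : ∀ p, 0 < g p := fun p =>
    div_pos (hQpos p) (Real.rpow_pos_of_pos (div_pos (hpos _) (hpos 0)) _)
  -- Step A: assoc M (Q p) = log (M 0 * (Q p)^p / M p)  for p ≥ 1
  have stepA : ∀ p : ℕ, 1 ≤ p → assoc M (Q p) = Real.log (M 0 * (Q p) ^ p / M p) := by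
    intro p hp
    have hlow : ∀ k, 1 ≤ k → k ≤ p → M k / M (k-1) ≤ Q p :=
      fun k h1 h2 => Qmono hpos hlc k p h1 h2
    have hhigh : ∀ k, p < k → Q p ≤ M k / M (k-1) :=
      fun k h1 => Qmono hpos hlc p k hp (le_of_lt h1)
    have hb := term_le hpos (hQpos p) p hlow hhigh
    refine le_antisymm (ciSup_le hb) ?_
    exact le_ciSup ⟨_, by rintro _ ⟨q, rfl⟩; exact hb q⟩ p
  -- BddAbove in general
  have hbdd : ∀ t : ℝ, 0 < t →
      BddAbove (Set.range fun q : ℕ => Real.log (M 0 * t ^ q / M q)) := by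
    intro t ht
    obtain ⟨N, hlow, hhigh⟩ := exists_N hpos hlc hqtend t
    exact ⟨_, by rintro _ ⟨q, rfl⟩; exact term_le hpos ht N hlow hhigh q⟩
  -- Step B
  have stepB : ∀ p : ℕ, assoc M (2 * Q p) ≥
      (p : ℝ) * Real.log 2 + Real.log (M 0 * (Q p) ^ p / M p) := by
    intro p
    have ht : (0:ℝ) < 2 * Q p := mul_pos two_pos (hQpos p)
    have h1 : Real.log (M 0 * (2 * Q p) ^ p / M p) ≤ assoc M (2 * Q p) :=
      le_ciSup (hbdd _ ht) p
    refine le_trans (le_of_eq ?_) h1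
    have e : M 0 * (2 * Q p) ^ p / M p = 2 ^ p * (M 0 * (Q p) ^ p / M p) := by
      rw [mul_pow]; ring
    rw [e, Real.log_mul (by positivity)
        (div_pos (mul_pos (hpos 0) (pow_pos (hQpos p) p)) (hpos p)).ne', Real.log_pow]
  -- Step C: log identity
  have stepC : ∀ p : ℕ, 2 ≤ p →
      Real.log (M 0 * (Q p) ^ p / M p) = ((p : ℝ) - 1) * Real.log (g p) := by
    intro p hp
    have hMp : M p = Q p * M (p-1) := (div_mul_cancel₀ _ (hpos (p-1)).ne').symm
    have hpne : ((p:ℝ) - 1) ≠ 0 := by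
      have : (2:ℝ) ≤ (p:ℝ) := by exact_mod_cast hp
      linarith
    have e1 : Real.log (M 0 * (Q p) ^ p / M p)
        = Real.log (M 0) + (p:ℝ) * Real.log (Q p)
          - (Real.log (Q p) + Real.log (M (p-1))) := by
      rw [Real.log_div (mul_pos (hpos 0) (pow_pos (hQpos p) p)).ne' (hpos p).ne',
        Real.log_mul (hpos 0).ne' (pow_pos (hQpos p) p).ne', Real.log_pow, hMp,
        Real.log_mul (hQpos p).ne' (hpos _).ne']
    have e2 : Real.log (g p) = Real.log (Q p)
        - (1/((p:ℝ)-1)) * (Real.log (M (p-1)) - Real.log (M 0)) := by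
      rw [hg]
      simp only
      rw [Real.log_div (hQpos p).ne'
          (Real.rpow_pos_of_pos (div_pos (hpos _) (hpos 0)) _).ne',
        Real.log_rpow (div_pos (hpos _) (hpos 0)),
        Real.log_div (hpos _).ne' (hpos 0).ne']
      try ring
    rw [e1, e2]
    field_simp
    try ring
  -- Step D: eventual lower bound on assoc M (Q p)
  have stepD : ∀ᶠ p : ℕ in atTop, Real.log 2 ≤ assoc M (Q p) := by
    have hev : ∀ᶠ p : ℕ in atTop, 2 * Q 1 ≤ Q p ∧ 1 ≤ p := by
      filter_upwards [hqtend.eventually_ge_atTop (2 * Q 1), eventually_ge_atTop 1]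
        with p h1 h2 using ⟨h1, h2⟩
    filter_upwards [hev] with p ⟨h1, h2⟩
    have hM1 : M 1 = Q 1 * M 0 := (div_mul_cancel₀ _ (hpos 0).ne').symm
    have hterm : Real.log 2 ≤ Real.log (M 0 * (Q p) ^ 1 / M 1) := by
      apply Real.log_le_log two_pos
      rw [pow_one, hM1, le_div_iff₀ (mul_pos (hQpos 1) (hpos 0))]
      have h0 := hpos 0
      nlinarith [hQpos 1]
    exact le_trans hterm (le_ciSup (hbdd _ (hQpos p)) 1)
  -- Step E: ratio tendsto 1 along Q
  have stepE : Tendsto (fun p : ℕ => assoc M (2 * Q p) / assoc M (Q p))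
      atTop (nhds 1) := (hslow 2 two_pos).comp hqtend
  -- Step F: log (g p) → ∞
  have stepF : Tendsto (fun p => Real.log (g p)) atTop atTop := by
    rw [tendsto_atTop]
    intro A
    set A' : ℝ := max A 1 with hA'
    have hA'pos : 0 < A' := lt_of_lt_of_le one_pos (le_max_right _ _)
    have hl2 : (0:ℝ) < Real.log 2 := Real.log_pos one_lt_two
    set ε : ℝ := Real.log 2 / A' with hε
    have hεpos : 0 < ε := div_pos hl2 hA'pos
    have hratio : ∀ᶠ p : ℕ in atTop,
        assoc M (2 * Q p) / assoc M (Q p) < 1 + ε :=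
      stepE.eventually_lt_const (by linarith)
    filter_upwards [hratio, stepD, eventually_ge_atTop 2] with p hr hw hp2
    have hp1 : 1 ≤ p := by omega
    have hωpos : 0 < assoc M (Q p) := lt_of_lt_of_le hl2 hw
    have hΩ : assoc M (2 * Q p) < (1 + ε) * assoc M (Q p) :=
      (div_lt_iff₀ hωpos).mp hr
    have hB := stepB p
    have hA1 := stepA p hp1
    have hC := stepC p hp2
    -- p log 2 ≤ Ω - ω < ε ω = ε (p-1) L
    set L := Real.log (g p) with hL
    have hω : assoc M (Q p) = ((p:ℝ) - 1) * L := by rw [hA1, hC]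
    have hkey : (p:ℝ) * Real.log 2 < ε * (((p:ℝ) - 1) * L) := by
      have : (p:ℝ) * Real.log 2 + assoc M (Q p) ≤ assoc M (2 * Q p) := by
        rw [hA1]; exact hB
      nlinarith [hω]
    have hpR : (2:ℝ) ≤ (p:ℝ) := by exact_mod_cast hp2
    have hLpos : 0 < L := by
      rcases lt_or_ge 0 L with h | h
      · exact h
      · exfalso
        have : ((p:ℝ) - 1) * L ≤ 0 := mul_nonpos_of_nonneg_of_nonpos (by linarith) h
        rw [hω] at hωpos; linarith
    have h2 : ε * (((p:ℝ) - 1) * L) ≤ ε * ((p:ℝ) * L) := by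
      apply mul_le_mul_of_nonneg_left _ (le_of_lt hεpos)
      nlinarith
    have h3 : (p:ℝ) * Real.log 2 < ε * ((p:ℝ) * L) := lt_of_lt_of_le hkey h2
    have h4 : Real.log 2 < ε * L := by
      have hp0 : (0:ℝ) < (p:ℝ) := by linarith
      nlinarith
    have h5 : A' < L := by
      rw [hε] at h4
      rw [div_mul_eq_mul_div, lt_div_iff₀ hA'pos] at h4
      nlinarith
    exact le_of_lt (lt_of_le_of_lt (le_max_left A 1) h5)
  -- conclude
  have := (Real.tendsto_exp_atTop.comp stepF).congr
    (fun p => Real.exp_log (hgpos p))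
  exact this
end
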